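/- Generalized CTW node-weighting lemma: for each node n at depth d of the depth-D context tree, P^n_w(bits routed to n | a_{1:t}) = ∑_{M ∈ C_{D−d}} 2^{−Γ_{D−d}(M)} ∏_{l ∈ L(M)} Pr_kt(bits routed to the context-tree node with path p(n)p(l)). -/
import Mathlib


/-- KT conditional probability of the next bit. -/
noncomputable def ktCond (a b : ℕ) (y : Bool) : ℝ :=
  if y then ((b : ℝ) + 1/2) / ((a : ℝ) + (b : ℝ) + 1)
  else ((a : ℝ) + 1/2) / ((a : ℝ) + (b : ℝ) + 1)

noncomputable def ktBlockAux : ℕ → ℕ → List Bool → ℝ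
  | _, _, [] => 1
  | a, b, y :: ys =>
      ktCond a b y * ktBlockAux (if y then a else a + 1) (if y then b + 1 else b) ys

/-- KT block probability `Pr_kt`. -/
noncomputable def ktBlock (s : List Bool) : ℝ := ktBlockAux 0 0 s

/-- A model of a prediction suffix tree. -/
inductive BinTree where
  | leaf : BinTree
  | node : BinTree → BinTree → BinTree
deriving DecidableEq

namespace BinTree

def depth : BinTree → ℕ
  | leaf => 0
  | node l r => max l.depth r.depth + 1

def numNodes : BinTree → ℕ
  | leaf => 1
  | node l r => l.numNodes + r.numNodes + 1

def leavesAt : ℕ → BinTree → ℕ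
  | 0, leaf => 1
  | 0, node _ _ => 0
  | _ + 1, leaf => 0
  | d + 1, node l r => leavesAt d l + leavesAt d r

/-- `Γ_D(M)`: nodes of `M` minus leaves of `M` at depth `D`. -/
def cost (D : ℕ) (M : BinTree) : ℕ := M.numNodes - leavesAt D M

end BinTree

/- `rt s` denotes the subsequence of the bits of `x_{1:t}` routed (by the
action-conditional context of `a_{1:t}` and `x_{1:t}`) to the context-tree node
with path description `s`. -/

/-- The CTW weighted probability `P^n_w` at a node with path `s` and remaining
depth `k`: `P^n_w = Pr_kt` at leaves, and
`P^n_w = ½·Pr_kt + ½·P^{n_l}_w·P^{n_r}_w` at internal nodes. -/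
noncomputable def Pw (rt : List Bool → List Bool) : ℕ → List Bool → ℝ
  | 0, s => ktBlock (rt s)
  | k + 1, s =>
      (1/2) * ktBlock (rt s) +
        (1/2) * (Pw rt k (s ++ [true]) * Pw rt k (s ++ [false]))

/-- `Pr(x_{1:t} | M, a_{1:t})` for a tree model `M` rooted at path `s`:
the product over the leaves `l` of `M` of the KT block probabilities of the
bits routed to the node with path `p(s)p(l)`. -/
noncomputable def modelProb (rt : List Bool → List Bool) : BinTree → List Bool → ℝ
  | .leaf, s => ktBlock (rt s)
  | .node l r, s => modelProb rt l (s ++ [true]) * modelProb rt r (s ++ [false])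



lemma ktBlockAux_nonneg : ∀ (ys : List Bool) (a b : ℕ), 0 ≤ ktBlockAux a b ys
  | [], _, _ => by simp [ktBlockAux]
  | y :: ys, a, b => by
    refine mul_nonneg ?_ (ktBlockAux_nonneg ys _ _)
    unfold ktCond
    split <;> positivity

lemma ktBlock_nonneg (s : List Bool) : 0 ≤ ktBlock s := ktBlockAux_nonneg s 0 0

lemma modelProb_nonneg (rt : List Bool → List Bool) :
    ∀ (M : BinTree) (s : List Bool), 0 ≤ modelProb rt M s
  | .leaf, s => ktBlock_nonneg _
  | .node l r, s => mul_nonneg (modelProb_nonneg rt l _) (modelProb_nonneg rt r _)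

lemma leavesAt_le_numNodes : ∀ (d : ℕ) (M : BinTree), M.leavesAt d ≤ M.numNodes
  | 0, .leaf => le_refl 1
  | 0, .node _ _ => Nat.zero_le _
  | _ + 1, .leaf => Nat.zero_le _
  | d + 1, .node l r => by
    have hl := leavesAt_le_numNodes d l
    have hr := leavesAt_le_numNodes d r
    simp only [BinTree.leavesAt, BinTree.numNodes]; omega

lemma cost_node (k : ℕ) (l r : BinTree) :
    BinTree.cost (k + 1) (.node l r) = BinTree.cost k l + BinTree.cost k r + 1 := by
  have hl := leavesAt_le_numNodes k l
  have hr := leavesAt_le_numNodes k r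
  simp only [BinTree.cost, BinTree.numNodes, BinTree.leavesAt]; omega

lemma depth_eq_zero {M : BinTree} (h : M.depth ≤ 0) : M = .leaf := by
  cases M with
  | leaf => rfl
  | node l r => simp [BinTree.depth] at h

lemma key (rt : List Bool → List Bool) :
    ∀ (k : ℕ) (s : List Bool),
    HasSum
      (fun M : {M : BinTree // M.depth ≤ k} =>
        (2 : ℝ) ^ (-(BinTree.cost k M.1 : ℤ)) * modelProb rt M.1 s)
      (Pw rt k s) := by
  intro k
  induction k with
  | zero =>
    intro s
    have h0 : (⟨BinTree.leaf, le_refl 0⟩ : {M : BinTree // M.depth ≤ 0}).1 = BinTree.leaf := rfl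
    have := hasSum_single (f := fun M : {M : BinTree // M.depth ≤ 0} =>
        (2 : ℝ) ^ (-(BinTree.cost 0 M.1 : ℤ)) * modelProb rt M.1 s)
        ⟨BinTree.leaf, le_refl 0⟩ (fun b hb => absurd (Subtype.ext (depth_eq_zero b.2)) hb)
    simpa [BinTree.cost, BinTree.numNodes, BinTree.leavesAt, modelProb, Pw] using this
  | succ k ih =>
    intro s
    set S := {M : BinTree // M.depth ≤ k}
    set f : S → ℝ := fun M => (2 : ℝ) ^ (-(BinTree.cost k M.1 : ℤ)) * modelProb rt M.1 (s ++ [true])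
    set g : S → ℝ := fun M => (2 : ℝ) ^ (-(BinTree.cost k M.1 : ℤ)) * modelProb rt M.1 (s ++ [false])
    have h1 : HasSum f (Pw rt k (s ++ [true])) := ih (s ++ [true])
    have h2 : HasSum g (Pw rt k (s ++ [false])) := ih (s ++ [false])
    have hnn : ∀ (st : List Bool) (M : S), 0 ≤ (2 : ℝ) ^ (-(BinTree.cost k M.1 : ℤ)) * modelProb rt M.1 st :=
      fun st M => mul_nonneg (by positivity) (modelProb_nonneg rt _ _)
    have hsummable : Summable (fun x : S × S => f x.1 * g x.2) :=
      Summable.mul_of_nonneg h1.summable h2.summable (fun M => hnn _ M) (fun M => hnn _ M)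
    have hmul : HasSum (fun x : S × S => f x.1 * g x.2)
        (Pw rt k (s ++ [true]) * Pw rt k (s ++ [false])) := h1.mul h2 hsummable
    -- now map into the big type
    set F : {M : BinTree // M.depth ≤ k + 1} → ℝ := fun M =>
      (2 : ℝ) ^ (-(BinTree.cost (k+1) M.1 : ℤ)) * modelProb rt M.1 s with hF
    set T : Set {M : BinTree // M.depth ≤ k + 1} := {x | x.1 = BinTree.leaf} with hT
    have hleafmem : (⟨BinTree.leaf, Nat.zero_le _⟩ : {M : BinTree // M.depth ≤ k + 1}) ∈ T := rfl
    have hA : HasSum (F ∘ (↑) : T → ℝ) ((1/2) * ktBlock (rt s)) := by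
      have := hasSum_single (f := (F ∘ (↑) : T → ℝ)) ⟨⟨BinTree.leaf, Nat.zero_le _⟩, hleafmem⟩
        (fun b hb => absurd (by apply Subtype.ext; apply Subtype.ext; exact b.2) hb)
      have heq : (F ∘ (↑) : T → ℝ) ⟨⟨BinTree.leaf, Nat.zero_le _⟩, hleafmem⟩
          = (1/2) * ktBlock (rt s) := by
        show (2 : ℝ) ^ (-(BinTree.cost (k+1) BinTree.leaf : ℤ)) * modelProb rt BinTree.leaf s
            = (1/2) * ktBlock (rt s)
        have hc : BinTree.cost (k+1) BinTree.leaf = 1 := rfl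
        rw [hc, modelProb]
        norm_num
      rwa [heq] at this
    -- bijection from S × S to Tᶜ
    have hdep : ∀ (p : S × S), (BinTree.node p.1.1 p.2.1).depth ≤ k + 1 := by
      intro p
      simp only [BinTree.depth]
      exact Nat.succ_le_succ (max_le p.1.2 p.2.2)
    set e : S × S → (Tᶜ : Set {M : BinTree // M.depth ≤ k + 1}) := fun p =>
      ⟨⟨BinTree.node p.1.1 p.2.1, hdep p⟩, by simp [hT]⟩ with he
    have hbij : Function.Bijective e := by
      constructor
      · rintro ⟨⟨l1, hl1⟩, ⟨r1, hr1⟩⟩ ⟨⟨l2, hl2⟩, ⟨r2, hr2⟩⟩ h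
        simp only [he, Subtype.mk.injEq, BinTree.node.injEq] at h
        simp [Prod.ext_iff, Subtype.ext_iff, h.1, h.2]
      · rintro ⟨⟨M, hM⟩, hMc⟩
        cases M with
        | leaf => exact absurd rfl hMc
        | node l r =>
          have hd : max l.depth r.depth + 1 ≤ k + 1 := hM
          refine ⟨⟨⟨l, ?_⟩, ⟨r, ?_⟩⟩, rfl⟩ <;> omega
    have hB : HasSum (F ∘ (↑) : (Tᶜ : Set _) → ℝ)
        ((1/2) * (Pw rt k (s ++ [true]) * Pw rt k (s ++ [false]))) := by
      rw [← (Equiv.ofBijective e hbij).hasSum_iff]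
      have hfun : ((F ∘ (↑)) ∘ (Equiv.ofBijective e hbij) : S × S → ℝ)
          = fun x : S × S => (1/2) * (f x.1 * g x.2) := by
        funext p
        simp only [Function.comp, Equiv.ofBijective_apply, he, hF, f, g, cost_node, modelProb]
        push_cast
        rw [show (-((BinTree.cost k p.1.1 : ℤ) + (BinTree.cost k p.2.1 : ℤ) + 1))
            = (-(BinTree.cost k p.1.1 : ℤ)) + ((-(BinTree.cost k p.2.1 : ℤ)) + (-1)) by ring,
          zpow_add₀ (two_ne_zero), zpow_add₀ (two_ne_zero)]
        norm_num
        ring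
      rw [hfun]
      exact (hmul.mul_left _)
    have := hA.add_compl hB
    simpa [Pw] using this


/-- generalized node-weighting lemma: for each node `n` at depth
`d` (path description `s ∈ {0,1}^d`) of the depth-`D` context tree,
`P^n_w(bits routed to n | a_{1:t}) = ∑_{M ∈ C_{D−d}} 2^{−Γ_{D−d}(M)}
∏_{l ∈ L(M)} Pr_kt(bits routed to the node with path p(n)p(l))`. -/
theorem ctw_node_mixture (rt : List Bool → List Bool) (D d : ℕ) (hd : d ≤ D)
    (s : List Bool) (hs : s.length = d) :
    HasSum
      (fun M : {M : BinTree // M.depth ≤ D - d} =>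
        (2 : ℝ) ^ (-(BinTree.cost (D - d) M.1 : ℤ)) * modelProb rt M.1 s)
      (Pw rt (D - d) s) :=
  key rt (D - d) s
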